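/- Let X₁,…,Xₙ be independent real random variables each uniform on two points at distance at least 2 (i.e., Xᵢ uniform on {aᵢ, bᵢ} with |aᵢ - bᵢ| ≥ 2). Then for every integer ℓ ≥ 1 and x ∈ ℝ, P(X₁+⋯+Xₙ ∈ (x-ℓ, x+ℓ]) ≤ 2^{-n} ∑ (binomial coefficients n choose j over the ℓ middle values of j), which equals P(ε₁+⋯+εₙ ∈ (-ℓ, ℓ]) for i.i.d. uniform εᵢ ∈ {-1,1}. -/

import Mathlib

open MeasureTheory ProbabilityTheory
open scoped ENNReal NNReal

open Finset
open scoped symmDiff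

/-- The Lévy concentration function `Q_h(μ) = sup_x μ((x, x+h])`. -/
noncomputable def conc (μ : Measure ℝ) (h : ℝ) : ℝ≥0∞ :=
  ⨆ x : ℝ, μ (Set.Ioc x (x + h))

/-- `nu k` is the uniform distribution on the arithmetic progression `{-k+1, -k+3, …, k-1}`. -/
noncomputable def nu (k : ℕ) : Measure ℝ :=
  (k : ℝ≥0∞)⁻¹ • ∑ i ∈ Finset.range k, Measure.dirac (2 * (i : ℝ) - k + 1)

instance nu_fin (k : ℕ) : IsFiniteMeasure (nu k) := by
  constructor
  rw [nu, Measure.smul_apply, Measure.coe_finset_sum, Finset.sum_apply]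
  simp only [Measure.dirac_apply' _ MeasurableSet.univ, Set.indicator_univ, Pi.one_apply,
    Finset.sum_const, Finset.card_range, smul_eq_mul, nsmul_eq_mul, mul_one]
  rcases Nat.eq_zero_or_pos k with h | h
  · simp [h]
  · rw [ENNReal.inv_mul_cancel (by exact_mod_cast h.ne' : (k:ℝ≥0∞) ≠ 0) (by simp)]
    exact ENNReal.one_lt_top

lemma choose_mono_low {n a b : ℕ} (hab : a ≤ b) (h : 2 * b ≤ n) :
    n.choose a ≤ n.choose b := by
  induction b with
  | zero => simpa [Nat.le_zero.mp hab]
  | succ c ih =>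
    rcases Nat.eq_or_lt_of_le hab with rfl | hlt
    · exact le_rfl
    · exact (ih (Nat.lt_succ_iff.mp hlt) (by omega)).trans
        (Nat.choose_le_succ_of_lt_half_left (by omega))

lemma choose_anti_center {n j k : ℕ} (hj : j ≤ n) (hk : k ≤ n)
    (h : |2 * (k : ℤ) - n| ≤ |2 * (j : ℤ) - n|) : n.choose j ≤ n.choose k := by
  -- reduce to the case 2*j ≤ n, 2*k ≤ n
  have key : ∀ p q : ℕ, p ≤ n → q ≤ n → 2 * p ≤ n → 2 * q ≤ n →
      (|2 * (q : ℤ) - n| ≤ |2 * (p : ℤ) - n|) → n.choose p ≤ n.choose q := by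
    intro p q hp hq h2p h2q hpq
    have : p ≤ q := by
      rw [abs_of_nonpos (by push_cast; omega), abs_of_nonpos (by push_cast; omega)] at hpq
      omega
    exact choose_mono_low this h2q
  rcases le_or_gt (2 * j) n with h2j | h2j <;> rcases le_or_gt (2 * k) n with h2k | h2k
  · exact key j k hj hk h2j h2k h
  · calc n.choose j ≤ n.choose (n - k) := by
          refine key j (n - k) hj (Nat.sub_le _ _) h2j (by omega) ?_
          have : |2 * ((n : ℤ) - k) - n| = |2 * (k : ℤ) - n| := by
            rw [show 2 * ((n : ℤ) - k) - n = -(2 * k - n) by ring, abs_neg]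
          rw [Nat.cast_sub hk]; rw [this]; exact h
        _ = n.choose k := Nat.choose_symm hk
  · have hnj : n.choose j = n.choose (n - j) := (Nat.choose_symm hj).symm
    rw [hnj]
    refine key (n - j) k (Nat.sub_le _ _) hk (by omega) h2k ?_
    have : |2 * ((n : ℤ) - j) - n| = |2 * (j : ℤ) - n| := by
      rw [show 2 * ((n : ℤ) - j) - n = -(2 * j - n) by ring, abs_neg]
    rw [Nat.cast_sub hj, this]; exact h
  · rw [← Nat.choose_symm hj, ← Nat.choose_symm hk]
    refine key (n - j) (n - k) (Nat.sub_le _ _) (Nat.sub_le _ _) (by omega) (by omega) ?_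
    have e1 : |2 * ((n : ℤ) - j) - n| = |2 * (j : ℤ) - n| := by
      rw [show 2 * ((n : ℤ) - j) - n = -(2 * j - n) by ring, abs_neg]
    have e2 : |2 * ((n : ℤ) - k) - n| = |2 * (k : ℤ) - n| := by
      rw [show 2 * ((n : ℤ) - k) - n = -(2 * k - n) by ring, abs_neg]
    rw [Nat.cast_sub hj, Nat.cast_sub hk, e1, e2]; exact h

/-- LP step. -/
lemma lp_step {n ℓ : ℕ} (m : ℕ → ℕ) (J : Finset ℕ) (hJsub : J ⊆ range (n + 1))
    (hJcard : J.card = ℓ)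
    (hm : ∀ j ∈ range (n + 1), m j ≤ n.choose j)
    (hout : ∀ j ∈ range (n + 1), j ∉ J → ∀ k ∈ J, n.choose j ≤ n.choose k)
    (hℓ : 1 ≤ ℓ)
    (hsum : ∑ j ∈ range (n + 1), (m j : ℚ) / n.choose j ≤ ℓ) :
    ∑ j ∈ range (n + 1), m j ≤ ∑ j ∈ J, n.choose j := by
  have hJne : J.Nonempty := card_pos.mp (by omega)
  obtain ⟨k₀, hk₀J, hk₀min⟩ := J.exists_min_image (fun j => (n.choose j : ℚ)) hJne
  set f : ℕ → ℚ := fun j => (m j : ℚ) / n.choose j with hf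
  set c : ℚ := (n.choose k₀ : ℚ) with hc
  have hchoosepos : ∀ j ∈ range (n + 1), (0 : ℚ) < n.choose j := by
    intro j hj
    exact_mod_cast Nat.choose_pos (Nat.lt_succ_iff.mp (mem_range.mp hj))
  have hcnonneg : (0 : ℚ) ≤ c := by positivity
  have hsplitm : ∑ j ∈ range (n + 1), (m j : ℚ)
      = ∑ j ∈ range (n + 1) \ J, (m j : ℚ) + ∑ j ∈ J, (m j : ℚ) :=
    (sum_sdiff hJsub).symm
  have hsplitf : ∑ j ∈ range (n + 1), f j
      = ∑ j ∈ range (n + 1) \ J, f j + ∑ j ∈ J, f j :=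
    (sum_sdiff hJsub).symm
  have hfnonneg : ∀ j, 0 ≤ f j := by intro j; positivity
  have h1 : ∑ j ∈ range (n + 1) \ J, (m j : ℚ)
      ≤ (∑ j ∈ range (n + 1) \ J, f j) * c := by
    rw [sum_mul]
    refine sum_le_sum fun j hj => ?_
    have hjr := (mem_sdiff.mp hj).1
    have hjnJ := (mem_sdiff.mp hj).2
    have hne : ((n.choose j : ℚ)) ≠ 0 := ne_of_gt (hchoosepos j hjr)
    have : (m j : ℚ) = f j * n.choose j := (div_mul_cancel₀ _ hne).symm
    rw [this]
    refine mul_le_mul_of_nonneg_left ?_ (hfnonneg j)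
    rw [hc]
    exact_mod_cast hout j hjr hjnJ k₀ hk₀J
  have h3 : (∑ j ∈ range (n + 1) \ J, f j) * c ≤ ((ℓ : ℚ) - ∑ j ∈ J, f j) * c := by
    apply mul_le_mul_of_nonneg_right _ hcnonneg
    have := hsum
    rw [hsplitf] at this
    linarith
  have hcard : (ℓ : ℚ) = ∑ _j ∈ J, (1 : ℚ) := by simp [hJcard]
  have h4 : ((ℓ : ℚ) - ∑ j ∈ J, f j) * c = ∑ j ∈ J, (1 - f j) * c := by
    rw [hcard, ← sum_sub_distrib, sum_mul]
  have h5 : ∑ j ∈ J, (1 - f j) * c ≤ ∑ j ∈ J, ((n.choose j : ℚ) - m j) := by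
    refine sum_le_sum fun j hj => ?_
    have hjr := hJsub hj
    have hpos := hchoosepos j hjr
    have hmj : (m j : ℚ) ≤ n.choose j := by exact_mod_cast hm j hjr
    have hfrac : (0 : ℚ) ≤ 1 - f j := by
      rw [sub_nonneg, hf, div_le_one hpos]; exact hmj
    calc (1 - f j) * c ≤ (1 - f j) * n.choose j :=
          mul_le_mul_of_nonneg_left (hk₀min j hj) hfrac
      _ = (n.choose j : ℚ) - m j := by
          rw [hf, sub_mul, one_mul, div_mul_cancel₀ _ (ne_of_gt hpos)]
  have h6 : ∑ j ∈ J, (m j : ℚ) + ∑ j ∈ J, ((n.choose j : ℚ) - m j)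
      = ∑ j ∈ J, (n.choose j : ℚ) := by
    rw [← sum_add_distrib]
    exact sum_congr rfl fun j _ => by ring
  have final : (∑ j ∈ range (n + 1), (m j : ℚ)) ≤ ∑ j ∈ J, (n.choose j : ℚ) := by
    linarith
  exact_mod_cast final

lemma sum_pm_eq {n : ℕ} (v : Fin n → ℝ) (A B : Finset (Fin n)) (hAB : A ⊆ B) :
    (∑ i, if i ∈ B then v i else -v i) - (∑ i, if i ∈ A then v i else -v i)
      = 2 * ∑ i ∈ B \ A, v i := by
  classical
  rw [← sum_sub_distrib]
  rw [← sum_subset (subset_univ (B \ A)) (fun i _ hi => by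
    by_cases hB : i ∈ B
    · have hA : i ∈ A := by
        by_contra hA
        exact hi (mem_sdiff.mpr ⟨hB, hA⟩)
      simp [hA, hB]
    · have hA : i ∉ A := fun hA => hB (hAB hA)
      simp [hA, hB])]
  rw [mul_sum]
  refine sum_congr rfl fun i hi => ?_
  have hB : i ∈ B := (mem_sdiff.mp hi).1
  have hA : i ∉ A := (mem_sdiff.mp hi).2
  simp [hA, hB]; ring

lemma key_count {n : ℕ} (v : Fin n → ℝ) (hv : ∀ i, 1 ≤ v i) (ℓ : ℕ) (hℓ : 1 ≤ ℓ) (x : ℝ) :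
    (univ.filter (fun A : Finset (Fin n) =>
      (∑ i, if i ∈ A then v i else -v i) ∈ Set.Ioc x (x + 2 * ℓ))).card
    ≤ ∑ j ∈ (range (n + 1)).filter (fun j => n < 2 * j + ℓ ∧ 2 * j ≤ n + ℓ),
        n.choose j := by
  classical
  set S : Finset (Fin n) → ℝ := fun A => ∑ i, if i ∈ A then v i else -v i with hSdef
  set F := univ.filter (fun A : Finset (Fin n) => S A ∈ Set.Ioc x (x + 2 * ℓ)) with hFdef
  set J := (range (n + 1)).filter (fun j => n < 2 * j + ℓ ∧ 2 * j ≤ n + ℓ) with hJdef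
  -- monotonicity of S
  have hSmono : ∀ A B : Finset (Fin n), A ⊆ B → A ≠ B → S A + 2 ≤ S B := by
    intro A B hsub hne
    have hdiff : S B - S A = 2 * ∑ i ∈ B \ A, v i := sum_pm_eq v A B hsub
    have hne' : (B \ A).Nonempty := by
      rw [sdiff_nonempty]
      intro h
      exact hne (Finset.Subset.antisymm hsub h)
    have h1 : (1 : ℝ) ≤ ∑ i ∈ B \ A, v i := by
      obtain ⟨i0, hi0⟩ := hne'
      calc (1 : ℝ) ≤ v i0 := hv i0
        _ ≤ ∑ i ∈ B \ A, v i :=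
            single_le_sum (fun i _ => le_trans zero_le_one (hv i)) hi0
    linarith
  by_cases hcase : n < ℓ
  · have hJall : J = range (n + 1) := by
      rw [hJdef]
      apply filter_true_of_mem
      intro j hj
      have := mem_range.mp hj
      omega
    rw [hJall, Nat.sum_range_choose]
    calc F.card ≤ (univ : Finset (Finset (Fin n))).card := card_filter_le _ _
      _ = 2 ^ n := by simp [card_univ]
  · push_neg at hcase
    -- the height function
    set hfun : Finset (Fin n) → ℕ := fun A => (⌈(S A - x) / 2⌉ - 1).toNat with hhfun
    have hceil : ∀ A ∈ F, 1 ≤ ⌈(S A - x) / 2⌉ ∧ ⌈(S A - x) / 2⌉ ≤ (ℓ : ℤ) := by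
      intro A hA
      have hmem := (mem_filter.mp hA).2
      obtain ⟨h1, h2⟩ := hmem
      constructor
      · have := Int.ceil_pos.mpr (by linarith : (0:ℝ) < (S A - x) / 2)
        omega
      · rw [Int.ceil_le]
        push_cast
        linarith
    have hfun_mem : ∀ A ∈ F, hfun A ∈ range ℓ := by
      intro A hA
      obtain ⟨h1, h2⟩ := hceil A hA
      rw [mem_range]
      show (⌈(S A - x) / 2⌉ - 1).toNat < ℓ
      omega
    -- antichain fibers
    have hanti : ∀ t : ℕ, IsAntichain (· ⊆ ·)
        ((F.filter (fun A => hfun A = t)) : Set (Finset (Fin n))) := by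
      intro t A hA B hB hne hsub
      simp only [coe_filter, Set.mem_setOf_eq] at hA hB
      obtain ⟨hAF, hAt⟩ := hA
      obtain ⟨hBF, hBt⟩ := hB
      obtain ⟨hA1, hA2⟩ := hceil A hAF
      obtain ⟨hB1, hB2⟩ := hceil B hBF
      have hceq : ⌈(S A - x) / 2⌉ = ⌈(S B - x) / 2⌉ := by
        have hAt' : (⌈(S A - x) / 2⌉ - 1).toNat = t := hAt
        have hBt' : (⌈(S B - x) / 2⌉ - 1).toNat = t := hBt
        omega
      have hstep : S A + 2 ≤ S B := hSmono A B hsub hne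
      have hup : (S B - x) / 2 ≤ (⌈(S A - x) / 2⌉ : ℝ) := by
        rw [hceq]; exact Int.le_ceil _
      have hdown : ((⌈(S A - x) / 2⌉ : ℤ) : ℝ) - 1 < (S A - x) / 2 := by
        have := Int.ceil_lt_add_one ((S A - x) / 2)
        linarith
      linarith
    -- fiberwise decomposition of slices
    have hfib : ∀ j, (F # j).card
        = ∑ t ∈ range ℓ, ((F.filter (fun A => hfun A = t)) # j).card := by
      intro j
      rw [card_eq_sum_card_fiberwise (f := hfun) (t := range ℓ)
        (fun A hA => hfun_mem A (mem_slice.mp hA).1)]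
      refine sum_congr rfl fun t _ => ?_
      congr 1
      ext A
      simp only [mem_filter, mem_slice]
      tauto
    have hcardF : F.card = ∑ j ∈ range (n + 1), (F # j).card := by
      rw [card_eq_sum_card_fiberwise (f := Finset.card) (t := range (n + 1))
        (fun A _ => mem_range.mpr (Nat.lt_succ_of_le (by
          simpa using card_le_univ A)))]
      refine sum_congr rfl fun j _ => ?_
      congr 1
    rw [hcardF]
    -- apply LP
    apply lp_step (fun j => (F # j).card) J (filter_subset _ _) _ _ _ hℓ
    · -- hsum
      have hswap : ∑ j ∈ range (n + 1), ((F # j).card : ℚ) / n.choose j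
          = ∑ t ∈ range ℓ, ∑ j ∈ range (n + 1),
              (((F.filter (fun A => hfun A = t)) # j).card : ℚ) / n.choose j := by
        rw [Finset.sum_comm]
        refine sum_congr rfl fun j _ => ?_
        rw [hfib j]
        push_cast
        rw [sum_div]
      rw [hswap]
      calc ∑ t ∈ range ℓ, ∑ j ∈ range (n + 1),
              (((F.filter (fun A => hfun A = t)) # j).card : ℚ) / n.choose j
          ≤ ∑ _t ∈ range ℓ, (1 : ℚ) := by
            refine sum_le_sum fun t _ => ?_
            have := Finset.sum_card_slice_div_choose_le_one (𝕜 := ℚ)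
              (𝒜 := F.filter (fun A => hfun A = t)) (hanti t)
            simpa [Fintype.card_fin] using this
        _ = (ℓ : ℚ) := by simp
    · -- hJcard
      have : J = Finset.Ioc ((n - ℓ) / 2) ((n + ℓ) / 2) := by
        ext j
        simp only [hJdef, mem_filter, mem_range, mem_Ioc]
        omega
      rw [this, Nat.card_Ioc]
      omega
    · -- hm
      intro j _
      calc (F # j).card ≤ (powersetCard j univ).card := by
            apply card_le_card
            intro A hA
            rw [mem_powersetCard_univ]
            exact (mem_slice.mp hA).2
        _ = n.choose j := by rw [card_powersetCard]; simp
    · -- hout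
      intro j hj hjnJ k hk
      rw [hJdef, mem_filter, mem_range] at hk
      obtain ⟨hk1, hk2, hk3⟩ := hk
      rw [mem_range] at hj
      rw [hJdef, mem_filter, mem_range] at hjnJ
      apply choose_anti_center (by omega) (by omega)
      have h1 : |2 * (k : ℤ) - n| ≤ (ℓ : ℤ) := abs_le.mpr ⟨by omega, by omega⟩
      have h2 : (ℓ : ℤ) ≤ |2 * (j : ℤ) - n| := by
        rcases abs_cases (2 * (j : ℤ) - n) with ⟨he, _⟩ | ⟨he, _⟩ <;> omega
      linarith

lemma rad_count {n : ℕ} (ℓ : ℕ) :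
    (univ.filter (fun A : Finset (Fin n) =>
      (∑ i, if i ∈ A then (1 : ℝ) else -1) ∈ Set.Ioc (-(ℓ : ℝ)) ℓ)).card
    = ∑ j ∈ (range (n + 1)).filter (fun j => n < 2 * j + ℓ ∧ 2 * j ≤ n + ℓ),
        n.choose j := by
  classical
  have hsum : ∀ A : Finset (Fin n),
      (∑ i, if i ∈ A then (1 : ℝ) else -1) = 2 * A.card - n := by
    intro A
    have : ∀ i : Fin n, (if i ∈ A then (1 : ℝ) else -1)
        = 2 * (if i ∈ A then (1 : ℝ) else 0) - 1 := by
      intro i; by_cases h : i ∈ A <;> simp [h] <;> norm_num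
    rw [Finset.sum_congr rfl fun i _ => this i, sum_sub_distrib, ← mul_sum]
    simp [sum_ite_mem, card_univ]
  have hcond : ∀ A : Finset (Fin n),
      ((∑ i, if i ∈ A then (1 : ℝ) else -1) ∈ Set.Ioc (-(ℓ : ℝ)) ℓ)
        ↔ (n < 2 * A.card + ℓ ∧ 2 * A.card ≤ n + ℓ) := by
    intro A
    rw [hsum, Set.mem_Ioc]
    constructor
    · rintro ⟨h1, h2⟩
      constructor
      · exact_mod_cast (by linarith : (n : ℝ) < 2 * A.card + ℓ)
      · exact_mod_cast (by linarith : (2 * A.card : ℝ) ≤ n + ℓ)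
    · rintro ⟨h1, h2⟩
      have h1' : (n : ℝ) < 2 * A.card + ℓ := by exact_mod_cast h1
      have h2' : (2 * A.card : ℝ) ≤ n + ℓ := by exact_mod_cast h2
      constructor <;> linarith
  set J := (range (n + 1)).filter (fun j => n < 2 * j + ℓ ∧ 2 * j ≤ n + ℓ) with hJdef
  rw [card_eq_sum_card_fiberwise (f := Finset.card) (t := J) (fun A hA => by
    rw [hJdef, Finset.mem_coe, mem_filter, mem_range]
    refine ⟨Nat.lt_succ_of_le (by simpa using card_le_univ A), ?_⟩
    exact (hcond A).mp (mem_filter.mp hA).2)]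
  refine sum_congr rfl fun j hj => ?_
  have hjJ := mem_filter.mp hj
  have : (univ.filter (fun A : Finset (Fin n) =>
      (∑ i, if i ∈ A then (1 : ℝ) else -1) ∈ Set.Ioc (-(ℓ : ℝ)) ℓ)).filter
        (fun A => A.card = j) = powersetCard j univ := by
    ext A
    simp only [mem_filter, mem_powersetCard_univ, mem_univ, true_and]
    constructor
    · rintro ⟨_, h⟩; exact h
    · intro h
      refine ⟨?_, h⟩
      rw [hcond A, h]
      exact hjJ.2
  rw [this, card_powersetCard]
  simp
lemma pi_two_point {n : ℕ} (f g : Fin n → ℝ) :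
    Measure.pi (fun i : Fin n => (2 : ℝ≥0∞)⁻¹ • (Measure.dirac (f i) + Measure.dirac (g i))) =
      (2 ^ n : ℝ≥0∞)⁻¹ • ∑ A : Finset (Fin n),
        Measure.dirac (fun i => if i ∈ A then f i else g i) := by
  classical
  haveI : ∀ i : Fin n,
      SigmaFinite ((2 : ℝ≥0∞)⁻¹ • (Measure.dirac (f i) + Measure.dirac (g i))) := by
    intro i
    have hfin : IsFiniteMeasure
        ((2 : ℝ≥0∞)⁻¹ • (Measure.dirac (f i) + Measure.dirac (g i))) := by
      constructor
      rw [Measure.smul_apply, Measure.add_apply]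
      simp only [measure_univ, smul_eq_mul]
      exact Ne.lt_top (by norm_num)
    infer_instance
  refine Measure.pi_eq fun s hs => ?_
  rw [Measure.smul_apply, Measure.coe_finset_sum, Finset.sum_apply]
  have hbox : MeasurableSet (Set.pi Set.univ s) := MeasurableSet.univ_pi hs
  have hd : ∀ A : Finset (Fin n),
      Measure.dirac (fun i => if i ∈ A then f i else g i) (Set.pi Set.univ s)
        = ∏ i, (if (if i ∈ A then f i else g i) ∈ s i then (1 : ℝ≥0∞) else 0) := by
    intro A
    rw [Measure.dirac_apply' _ hbox, Set.indicator_apply, Finset.prod_boole]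
    simp [Set.mem_univ_pi]
  simp only [hd]
  -- expand the product side
  have hμ : ∀ i, ((2 : ℝ≥0∞)⁻¹ • (Measure.dirac (f i) + Measure.dirac (g i))) (s i)
      = 2⁻¹ * ((if f i ∈ s i then (1 : ℝ≥0∞) else 0) + (if g i ∈ s i then (1 : ℝ≥0∞) else 0)) := by
    intro i
    rw [Measure.smul_apply, Measure.add_apply, Measure.dirac_apply' _ (hs i),
      Measure.dirac_apply' _ (hs i)]
    simp [Set.indicator_apply]
  simp only [hμ]
  rw [Finset.prod_mul_distrib, Finset.prod_const]
  rw [Finset.prod_add]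
  rw [Finset.powerset_univ]
  have hsplit : ∀ A : Finset (Fin n),
      (∏ i, (if (if i ∈ A then f i else g i) ∈ s i then (1 : ℝ≥0∞) else 0))
        = (∏ i ∈ A, (if f i ∈ s i then (1 : ℝ≥0∞) else 0))
            * ∏ i ∈ univ \ A, (if g i ∈ s i then (1 : ℝ≥0∞) else 0) := by
    intro A
    have : ∀ i : Fin n, (if (if i ∈ A then f i else g i) ∈ s i then (1 : ℝ≥0∞) else 0)
        = (if i ∈ A then (if f i ∈ s i then (1 : ℝ≥0∞) else 0)
            else (if g i ∈ s i then (1 : ℝ≥0∞) else 0)) := by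
      intro i; by_cases h : i ∈ A <;> simp [h]
    rw [Finset.prod_congr rfl fun i _ => this i, Finset.prod_ite]
    congr 1
    · apply Finset.prod_congr _ fun _ _ => rfl
      ext i; simp
    · apply Finset.prod_congr _ fun _ _ => rfl
      ext i; simp
  simp only [hsplit]
  simp only [ENNReal.inv_pow, smul_eq_mul, card_univ, Fintype.card_fin]

lemma apply_sum_set {n : ℕ} (p : Finset (Fin n) → Fin n → ℝ) (c d : ℝ) :
    ((2 ^ n : ℝ≥0∞)⁻¹ • ∑ A : Finset (Fin n), Measure.dirac (p A))
        {y : Fin n → ℝ | (∑ i, y i) ∈ Set.Ioc c d}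
      = (2 ^ n : ℝ≥0∞)⁻¹
          * ((univ.filter (fun A : Finset (Fin n) => (∑ i, p A i) ∈ Set.Ioc c d)).card : ℝ≥0∞) := by
  classical
  have hmeas : Measurable (fun y : Fin n → ℝ => ∑ i, y i) :=
    Finset.measurable_sum _ (fun i _ => measurable_pi_apply i)
  have hset : MeasurableSet {y : Fin n → ℝ | (∑ i, y i) ∈ Set.Ioc c d} :=
    hmeas measurableSet_Ioc
  rw [Measure.smul_apply, Measure.coe_finset_sum, Finset.sum_apply, smul_eq_mul]
  congr 1
  have : ∀ A : Finset (Fin n),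
      Measure.dirac (p A) {y : Fin n → ℝ | (∑ i, y i) ∈ Set.Ioc c d}
        = (if (∑ i, p A i) ∈ Set.Ioc c d then (1 : ℝ≥0∞) else 0) := by
    intro A
    rw [Measure.dirac_apply' _ hset, Set.indicator_apply]
    simp
  simp only [this]
  rw [Finset.sum_boole]

lemma pick_eq {n : ℕ} (a b : Fin n → ℝ) (hsep : ∀ i, 2 ≤ |a i - b i|)
    (A : Finset (Fin n)) :
    (∑ i, if i ∈ A then a i else b i)
      = (∑ i, (a i + b i) / 2)
        + ∑ i, (if i ∈ A ∆ (univ.filter (fun i => a i < b i)) then |a i - b i| / 2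
                else -(|a i - b i| / 2)) := by
  classical
  rw [← Finset.sum_add_distrib]
  refine Finset.sum_congr rfl fun i _ => ?_
  by_cases hm : a i < b i <;> by_cases hA : i ∈ A
  · have : i ∈ A ∆ (univ.filter (fun i => a i < b i)) ↔ False := by
      simp [Finset.mem_symmDiff, hA, hm]
    rw [if_pos hA, if_neg (by simp [this])]
    rw [abs_of_neg (by linarith)]
    ring
  · have : i ∈ A ∆ (univ.filter (fun i => a i < b i)) := by
      simp [Finset.mem_symmDiff, hA, hm]
    rw [if_neg hA, if_pos this, abs_of_neg (by linarith)]
    ring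
  · push_neg at hm
    have : i ∈ A ∆ (univ.filter (fun i => a i < b i)) := by
      simp [Finset.mem_symmDiff, hA, hm]
    rw [if_pos hA, if_pos this, abs_of_nonneg (by linarith)]
    ring
  · push_neg at hm
    have : i ∈ A ∆ (univ.filter (fun i => a i < b i)) ↔ False := by
      simp [Finset.mem_symmDiff, hA, hm]
    rw [if_neg hA, if_neg (by simp [this]), abs_of_nonneg (by linarith)]
    ring

/-- Littlewood–Offord for intervals of length 2ℓ: if Xᵢ is uniform on two points at
distance ≥ 2, then P(∑Xᵢ ∈ (x-ℓ, x+ℓ]) ≤ P(ε₁+⋯+εₙ ∈ (-ℓ, ℓ]) for i.i.d.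
Rademacher εᵢ (uniform on {-1, 1}, i.e. ν²). -/
theorem littlewood_offord_interval {Ω : Type*} [MeasurableSpace Ω]
    (P : Measure Ω) [IsProbabilityMeasure P]
    (n : ℕ) (a b : Fin n → ℝ) (hsep : ∀ i, 2 ≤ |a i - b i|)
    (X : Fin n → Ω → ℝ) (hmeas : ∀ i, Measurable (X i))
    (hindep : iIndepFun X P)
    (hunif : ∀ i, P.map (X i) =
      (2 : ℝ≥0∞)⁻¹ • (Measure.dirac (a i) + Measure.dirac (b i)))
    (ℓ : ℕ) (hℓ : 1 ≤ ℓ) (x : ℝ) :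
    P {ω | (∑ i, X i ω) ∈ Set.Ioc (x - ℓ) (x + ℓ)} ≤
      (Measure.pi fun _ : Fin n => nu 2) {y | (∑ i, y i) ∈ Set.Ioc (-(ℓ : ℝ)) ℓ} := by
  classical
  -- measurability
  have htuple : Measurable (fun ω (i : Fin n) => X i ω) :=
    measurable_pi_lambda _ hmeas
  have hsmeas : Measurable (fun y : Fin n → ℝ => ∑ i, y i) :=
    Finset.measurable_sum _ (fun i _ => measurable_pi_apply i)
  haveI : ∀ i : Fin n, SigmaFinite (P.map (X i)) := by
    intro i
    have hfin : IsFiniteMeasure (P.map (X i)) := by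
      rw [hunif i]
      constructor
      rw [Measure.smul_apply, Measure.add_apply]
      simp only [measure_univ, smul_eq_mul]
      exact Ne.lt_top (by norm_num)
    infer_instance
  -- joint law is the product measure
  have hmap : P.map (fun ω (i : Fin n) => X i ω) = Measure.pi (fun i => P.map (X i)) := by
    refine (Measure.pi_eq fun s hs => ?_).symm
    rw [Measure.map_apply htuple (MeasurableSet.univ_pi hs)]
    have hpre : (fun ω (i : Fin n) => X i ω) ⁻¹' (Set.pi Set.univ s)
        = ⋂ i ∈ (univ : Finset (Fin n)), X i ⁻¹' s i := by
      ext ω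
      simp [Set.mem_univ_pi]
    rw [hpre, hindep.measure_inter_preimage_eq_mul univ (fun i _ => hs i)]
    exact Finset.prod_congr rfl fun i _ => (Measure.map_apply (hmeas i) (hs i)).symm
  -- rewrite LHS
  have hsetL : MeasurableSet {y : Fin n → ℝ | (∑ i, y i) ∈ Set.Ioc (x - ℓ) (x + ℓ)} :=
    hsmeas measurableSet_Ioc
  have hLHS : P {ω | (∑ i, X i ω) ∈ Set.Ioc (x - ℓ) (x + ℓ)}
      = (P.map (fun ω (i : Fin n) => X i ω))
          {y : Fin n → ℝ | (∑ i, y i) ∈ Set.Ioc (x - ℓ) (x + ℓ)} := by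
    rw [Measure.map_apply htuple hsetL]
    rfl
  rw [hLHS, hmap]
  have hpia : Measure.pi (fun i => P.map (X i))
      = (2 ^ n : ℝ≥0∞)⁻¹ • ∑ A : Finset (Fin n),
          Measure.dirac (fun i => if i ∈ A then a i else b i) := by
    rw [show (fun i => P.map (X i))
        = (fun i : Fin n => (2 : ℝ≥0∞)⁻¹ • (Measure.dirac (a i) + Measure.dirac (b i)))
      from funext hunif]
    exact pi_two_point a b
  -- rewrite RHS
  have hnu : nu 2 = (2 : ℝ≥0∞)⁻¹ • (Measure.dirac (1 : ℝ) + Measure.dirac (-1 : ℝ)) := by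
    rw [nu]
    rw [Finset.sum_range_succ, Finset.sum_range_one]
    norm_num [add_comm]
  have hpib : (Measure.pi fun _ : Fin n => nu 2)
      = (2 ^ n : ℝ≥0∞)⁻¹ • ∑ A : Finset (Fin n),
          Measure.dirac (fun i => if i ∈ A then (1 : ℝ) else (-1 : ℝ)) := by
    rw [show (fun _ : Fin n => nu 2)
        = (fun i : Fin n => (2 : ℝ≥0∞)⁻¹ •
            (Measure.dirac ((fun _ : Fin n => (1:ℝ)) i)
              + Measure.dirac ((fun _ : Fin n => (-1:ℝ)) i)))
      from funext (fun _ => hnu)]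
    exact pi_two_point _ _
  rw [hpia, hpib]
  rw [apply_sum_set (fun A i => if i ∈ A then a i else b i) (x - ℓ) (x + ℓ)]
  rw [apply_sum_set (fun A i => if i ∈ A then (1 : ℝ) else (-1 : ℝ)) (-(ℓ : ℝ)) ℓ]
  apply mul_le_mul_right
  rw [Nat.cast_le]
  -- the combinatorial inequality
  set v : Fin n → ℝ := fun i => |a i - b i| / 2 with hvdef
  have hv : ∀ i, 1 ≤ v i := by
    intro i
    have := hsep i
    rw [hvdef]
    dsimp only
    linarith
  set mask := univ.filter (fun i => a i < b i) with hmask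
  set x₀ : ℝ := (x - ℓ) - ∑ i, (a i + b i) / 2 with hx₀
  have hcard : (univ.filter (fun A : Finset (Fin n) =>
      (∑ i, if i ∈ A then a i else b i) ∈ Set.Ioc (x - ℓ) (x + ℓ))).card
      = (univ.filter (fun A : Finset (Fin n) =>
        (∑ i, if i ∈ A then v i else -v i) ∈ Set.Ioc x₀ (x₀ + 2 * ℓ))).card := by
    apply Finset.card_bij' (fun A _ => A ∆ mask) (fun A _ => A ∆ mask)
    · intro A hA
      rw [Finset.mem_filter] at hA ⊢
      refine ⟨Finset.mem_univ _, ?_⟩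
      have := pick_eq a b hsep A
      rw [← hmask] at this
      obtain ⟨h1, h2⟩ := hA.2
      rw [this] at h1 h2
      constructor
      · rw [hx₀]; push_cast at h1 ⊢; linarith
      · rw [hx₀]; push_cast at h2 ⊢; linarith
    · intro A hA
      rw [Finset.mem_filter] at hA ⊢
      refine ⟨Finset.mem_univ _, ?_⟩
      have := pick_eq a b hsep (A ∆ mask)
      rw [← hmask, symmDiff_symmDiff_cancel_right] at this
      obtain ⟨h1, h2⟩ := hA.2
      rw [this]
      rw [hx₀] at h1 h2
      constructor
      · push_cast at h1 ⊢; linarith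
      · push_cast at h2 ⊢; linarith
    · intro A _
      exact symmDiff_symmDiff_cancel_right mask A
    · intro A _
      exact symmDiff_symmDiff_cancel_right mask A
  rw [hcard, rad_count ℓ]
  exact key_count v hv ℓ hℓ x₀
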